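/- Let α ∈ (0,1). For i = 1, 2 let Pᵢ be an n×n row-stochastic real matrix with stationary distribution φᵢ and limiting matrix Pᵢ* = 𝟙 φᵢᵀ, let Cᵢ ∈ ℝⁿ be a cost vector, and suppose I − α Pᵢ and I − α Pᵢ + α Pᵢ* are invertible. Define ηᵢ = φᵢᵀ Cᵢ and ηᵢ^α = φᵢᵀ ((I − α Pᵢ)⁻¹ Cᵢ). Then η₁^α < η₂^α if and only if η₁ < η₂, and η₁^α = η₂^α if and only if η₁ = η₂. -/

import Mathlib

open Matrix BigOperators

lemma vecMul_inv_stat {n : ℕ} (α : ℝ) (hα1 : α ≠ 1)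
    (P : Matrix (Fin n) (Fin n) ℝ) (φ : Fin n → ℝ)
    (hstat : φ ᵥ* P = φ) (hinv : IsUnit (1 - α • P).det) :
    φ ᵥ* (1 - α • P)⁻¹ = (1 - α)⁻¹ • φ := by
  have hsm : ∀ v : Fin n → ℝ, v ᵥ* (α • P) = α • (v ᵥ* P) := by
    intro v; ext j; simp [vecMul, dotProduct, Finset.mul_sum, mul_left_comm]
  have key : ((1 - α)⁻¹ • φ) ᵥ* (1 - α • P) = φ := by
    rw [vecMul_sub, Matrix.vecMul_one, hsm, smul_vecMul, hstat, smul_smul, ← sub_smul,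
      show (1 - α)⁻¹ - α * (1 - α)⁻¹ = 1 by
        rw [← one_sub_mul, mul_inv_cancel₀ (sub_ne_zero.mpr (Ne.symm hα1))], one_smul]
  calc φ ᵥ* (1 - α • P)⁻¹ = (((1 - α)⁻¹ • φ) ᵥ* (1 - α • P)) ᵥ* (1 - α • P)⁻¹ := by rw [key]
    _ = ((1 - α)⁻¹ • φ) ᵥ* ((1 - α • P) * (1 - α • P)⁻¹) := by rw [vecMul_vecMul]
    _ = (1 - α)⁻¹ • φ := by rw [Matrix.mul_nonsing_inv _ hinv, Matrix.vecMul_one]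

/-- Comparison lemma: ranking of stationary discounted
system-based performances matches the ranking of the average-cost ones. -/
theorem comparison_lemma {n : ℕ} (hn : 1 ≤ n) (α : ℝ) (hα : α ∈ Set.Ioo (0 : ℝ) 1)
    (P₁ P₂ : Matrix (Fin n) (Fin n) ℝ) (φ₁ φ₂ C₁ C₂ : Fin n → ℝ)
    (hP₁pos : ∀ i j, 0 ≤ P₁ i j) (hP₁row : ∀ i, ∑ j, P₁ i j = 1)
    (hP₂pos : ∀ i j, 0 ≤ P₂ i j) (hP₂row : ∀ i, ∑ j, P₂ i j = 1)
    (hφ₁pos : ∀ i, 0 ≤ φ₁ i) (hφ₁sum : ∑ i, φ₁ i = 1) (hφ₁stat : φ₁ ᵥ* P₁ = φ₁)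
    (hφ₂pos : ∀ i, 0 ≤ φ₂ i) (hφ₂sum : ∑ i, φ₂ i = 1) (hφ₂stat : φ₂ ᵥ* P₂ = φ₂)
    (hinv₁ : IsUnit (1 - α • P₁).det)
    (hinv₁' : IsUnit (1 - α • P₁ + α • vecMulVec 1 φ₁).det)
    (hinv₂ : IsUnit (1 - α • P₂).det)
    (hinv₂' : IsUnit (1 - α • P₂ + α • vecMulVec 1 φ₂).det) :
    (φ₁ ⬝ᵥ ((1 - α • P₁)⁻¹ *ᵥ C₁) < φ₂ ⬝ᵥ ((1 - α • P₂)⁻¹ *ᵥ C₂) ↔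
      φ₁ ⬝ᵥ C₁ < φ₂ ⬝ᵥ C₂) ∧
    (φ₁ ⬝ᵥ ((1 - α • P₁)⁻¹ *ᵥ C₁) = φ₂ ⬝ᵥ ((1 - α • P₂)⁻¹ *ᵥ C₂) ↔
      φ₁ ⬝ᵥ C₁ = φ₂ ⬝ᵥ C₂) := by
  obtain ⟨hα0, hα1⟩ := hα
  have hne : α ≠ 1 := ne_of_lt hα1
  have h1 : φ₁ ⬝ᵥ ((1 - α • P₁)⁻¹ *ᵥ C₁) = (1 - α)⁻¹ * (φ₁ ⬝ᵥ C₁) := by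
    rw [dotProduct_mulVec, vecMul_inv_stat α hne P₁ φ₁ hφ₁stat hinv₁, smul_dotProduct,
      smul_eq_mul]
  have h2 : φ₂ ⬝ᵥ ((1 - α • P₂)⁻¹ *ᵥ C₂) = (1 - α)⁻¹ * (φ₂ ⬝ᵥ C₂) := by
    rw [dotProduct_mulVec, vecMul_inv_stat α hne P₂ φ₂ hφ₂stat hinv₂, smul_dotProduct,
      smul_eq_mul]
  have hpos : 0 < (1 - α)⁻¹ := inv_pos.mpr (by linarith)
  rw [h1, h2]
  constructor
  · exact ⟨fun h => lt_of_mul_lt_mul_left h hpos.le, fun h => mul_lt_mul_of_pos_left h hpos⟩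
  · exact mul_right_injective₀ (ne_of_gt hpos) |>.eq_iff
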